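/- Let n agents have squared-error losses ℓ_i(θ) = E_{(x,y)∼D_i}(θᵀx − y)² over finite empirical distributions D_i, and utilities u_i(θ) = M_i − ℓ_i(θ) with M_i large enough that u_i > 0 on a convex compact domain P. Then each u_i is concave on P, and any maximizer of Σ_i log u_i(θ) over P is core-stable. -/

import Mathlib

private lemma log_one_add_ge {z : ℝ} (hz : -(1/2) ≤ z) :
    z - 2*z^2 ≤ Real.log (1+z) := by
  have h1 : (0:ℝ) < 1 + z := by linarith
  have h2 : Real.log (1+z)⁻¹ ≤ (1+z)⁻¹ - 1 :=
    Real.log_le_sub_one_of_pos (by positivity)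
  rw [Real.log_inv] at h2
  have h3 : z / (1+z) ≤ Real.log (1+z) := by
    have e : 1 - (1+z)⁻¹ = z/(1+z) := by field_simp; ring
    linarith [e ▸ (by linarith : 1 - (1+z)⁻¹ ≤ Real.log (1+z))]
  have h4 : z - 2*z^2 ≤ z/(1+z) := by
    rw [le_div_iff₀ h1]; nlinarith [sq_nonneg z, sq_nonneg (z*(1+2*z))]
  linarith

/-- Linear regression in federated learning. Each agent `i` has finitely many
samples and squared-error loss `ℓ i θ = (1/mᵢ) ∑ⱼ (⟪θ, x i j⟫ - y i j)²`; with
`u i θ = Mbound i - ℓ i θ` strictly positive on a convex compact `P`, each `u i` is concave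
on `P` and any maximizer of `∑ i, log (u i θ)` over `P` is core-stable. -/
theorem linear_regression_core_stable
    {d : ℕ} (P : Set (EuclideanSpace ℝ (Fin d)))
    (hPconv : Convex ℝ P) (hPcomp : IsCompact P)
    (n : ℕ) (m : Fin n → ℕ) (hm : ∀ i, 0 < m i)
    (x : ∀ i : Fin n, Fin (m i) → EuclideanSpace ℝ (Fin d))
    (y : ∀ i : Fin n, Fin (m i) → ℝ)
    (ℓ : Fin n → EuclideanSpace ℝ (Fin d) → ℝ)
    (hℓ : ∀ i θ, ℓ i θ = (1 / (m i : ℝ)) * ∑ j : Fin (m i), (inner ℝ θ (x i j) - y i j) ^ 2)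
    (Mbound : Fin n → ℝ)
    (u : Fin n → EuclideanSpace ℝ (Fin d) → ℝ)
    (hu : ∀ i θ, u i θ = Mbound i - ℓ i θ)
    (hpos : ∀ i, ∀ θ ∈ P, 0 < u i θ) :
    (∀ i, ConcaveOn ℝ P (u i)) ∧
    (∀ θstar ∈ P,
      (∀ θ ∈ P, ∑ i : Fin n, Real.log (u i θ) ≤ ∑ i : Fin n, Real.log (u i θstar)) →
      ¬ ∃ θ' ∈ P, ∃ S : Finset (Fin n), S.Nonempty ∧
        (∀ i ∈ S, (S.card : ℝ) / (n : ℝ) * u i θ' ≥ u i θstar) ∧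
        (∃ i ∈ S, (S.card : ℝ) / (n : ℝ) * u i θ' > u i θstar)) := by
  have hconc : ∀ i, ConcaveOn ℝ P (u i) := by
    intro i
    refine ⟨hPconv, ?_⟩
    intro A hA B hB s t hs ht hst
    have hts : t = 1 - s := by linarith
    subst hts
    have key : ∀ j : Fin (m i),
        ((inner ℝ (s • A + (1-s) • B) (x i j) : ℝ) - y i j)^2
          ≤ s * (((inner ℝ A (x i j) : ℝ)) - y i j)^2
            + (1-s) * (((inner ℝ B (x i j) : ℝ)) - y i j)^2 := by
      intro j
      rw [inner_add_left, real_inner_smul_left, real_inner_smul_left]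
      nlinarith [sq_nonneg ((inner ℝ A (x i j) : ℝ) - (inner ℝ B (x i j) : ℝ)),
        mul_nonneg hs ht,
        mul_nonneg (mul_nonneg hs ht)
          (sq_nonneg ((inner ℝ A (x i j) : ℝ) - (inner ℝ B (x i j) : ℝ)))]
    have hsum : ∑ j : Fin (m i), ((inner ℝ (s • A + (1-s) • B) (x i j) : ℝ) - y i j)^2
        ≤ s * ∑ j : Fin (m i), (((inner ℝ A (x i j) : ℝ)) - y i j)^2
          + (1-s) * ∑ j : Fin (m i), (((inner ℝ B (x i j) : ℝ)) - y i j)^2 := by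
      rw [Finset.mul_sum, Finset.mul_sum, ← Finset.sum_add_distrib]
      exact Finset.sum_le_sum (fun j _ => key j)
    have hmpos : (0:ℝ) ≤ 1/(m i : ℝ) := by positivity
    have hmul := mul_le_mul_of_nonneg_left hsum hmpos
    have hM : s * Mbound i + (1-s) * Mbound i = Mbound i := by ring
    simp only [smul_eq_mul, hu, hℓ]
    nlinarith [hmul, hM]
  refine ⟨hconc, ?_⟩
  intro θstar hθP hmax
  rintro ⟨θ', hθ'P, S, hSne, hweak, i0, hi0, hstrict⟩
  obtain ⟨j0, hj0⟩ := hSne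
  have hn : 0 < n := j0.pos
  have hnpos : (0:ℝ) < n := by exact_mod_cast hn
  have hus : ∀ i, 0 < u i θstar := fun i => hpos i _ hθP
  have hu' : ∀ i, 0 < u i θ' := fun i => hpos i _ hθ'P
  have hcard : 0 < S.card := Finset.card_pos.mpr ⟨j0, hj0⟩
  have hcpos : (0:ℝ) < S.card := by exact_mod_cast hcard
  obtain ⟨r, hr⟩ : ∃ r : Fin n → ℝ, r = fun i => u i θ' / u i θstar := ⟨_, rfl⟩
  have hrpos : ∀ i, 0 < r i := fun i => by rw [hr]; exact div_pos (hu' i) (hus i)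
  have hS : ∀ i ∈ S, (n:ℝ)/(S.card:ℝ) ≤ r i := by
    intro i hi
    have h := hweak i hi
    rw [hr]
    simp only
    rw [div_le_div_iff₀ hcpos (hus i)]
    nlinarith [mul_le_mul_of_nonneg_left h hnpos.le,
      (by field_simp : (n:ℝ) * ((S.card:ℝ)/(n:ℝ) * u i θ') = (S.card:ℝ) * u i θ')]
  have hSstrict : (n:ℝ)/(S.card:ℝ) < r i0 := by
    rw [hr]
    simp only
    rw [div_lt_div_iff₀ hcpos (hus i0)]
    nlinarith [mul_lt_mul_of_pos_left hstrict hnpos,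
      (by field_simp : (n:ℝ) * ((S.card:ℝ)/(n:ℝ) * u i0 θ') = (S.card:ℝ) * u i0 θ')]
  have hsumS : (n:ℝ) < ∑ i ∈ S, r i := by
    have h1 : ∑ _i ∈ S, (n:ℝ)/(S.card:ℝ) < ∑ i ∈ S, r i :=
      Finset.sum_lt_sum hS ⟨i0, hi0, hSstrict⟩
    have h2 : ∑ _i ∈ S, (n:ℝ)/(S.card:ℝ) = (n:ℝ) := by
      rw [Finset.sum_const, nsmul_eq_mul]
      field_simp
    linarith
  have hsumr : (n:ℝ) < ∑ i : Fin n, r i := by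
    have := Finset.sum_le_sum_of_subset_of_nonneg (Finset.subset_univ S)
      (fun i _ _ => (hrpos i).le)
    linarith
  obtain ⟨a, ha⟩ : ∃ a : Fin n → ℝ, a = fun i => r i - 1 := ⟨_, rfl⟩
  have haeq : ∀ i, a i = r i - 1 := fun i => by rw [ha]
  obtain ⟨c, hcdef⟩ : ∃ c : ℝ, c = ∑ i : Fin n, a i := ⟨_, rfl⟩
  have hc : 0 < c := by
    have h1 : ∑ i : Fin n, a i = (∑ i : Fin n, r i) - n := by
      simp [ha, Finset.sum_sub_distrib]
    rw [hcdef, h1]; linarith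
  obtain ⟨B, hBdef⟩ : ∃ B : ℝ, B = ∑ i : Fin n, (a i)^2 := ⟨_, rfl⟩
  have hB : 0 ≤ B := hBdef ▸ Finset.sum_nonneg (fun i _ => sq_nonneg _)
  obtain ⟨t₀, ht₀⟩ : ∃ t₀ : ℝ, t₀ = min (1/2) (c/(4*B+1)) := ⟨_, rfl⟩
  have ht0 : 0 < t₀ := ht₀ ▸ lt_min (by norm_num) (by positivity)
  have ht0half : t₀ ≤ 1/2 := ht₀ ▸ min_le_left _ _
  have hagt : ∀ i, -1 < a i := fun i => by
    rw [haeq i]; linarith [hrpos i]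
  have hzlb : ∀ i, -(1/2) ≤ t₀ * a i := by
    intro i
    nlinarith [mul_nonneg ht0.le (by linarith [hagt i] : (0:ℝ) ≤ a i + 1)]
  have heq : ∀ i, (1-t₀) * u i θstar + t₀ * u i θ' = u i θstar * (1 + t₀ * a i) := by
    intro i
    have h := (hus i).ne'
    rw [haeq i, hr]
    field_simp
    ring
  have hposc : ∀ i, 0 < (1-t₀) * u i θstar + t₀ * u i θ' := by
    intro i
    have h1 := hus i; have h2 := hu' i
    nlinarith
  have h1pt : ∀ i, 0 < 1 + t₀ * a i := fun i => by linarith [hzlb i]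
  have hlog : ∑ i : Fin n, Real.log (1 + t₀ * a i) ≤ 0 := by
    have hθtP : (1 - t₀) • θstar + t₀ • θ' ∈ P :=
      hPconv hθP hθ'P (by linarith) ht0.le (by ring)
    have hcomb : ∀ i, (1-t₀) * u i θstar + t₀ * u i θ'
        ≤ u i ((1 - t₀) • θstar + t₀ • θ') := by
      intro i
      have := (hconc i).2 hθP hθ'P (by linarith : (0:ℝ) ≤ 1 - t₀) ht0.le (by ring)
      simpa using this
    have h1 : ∀ i, Real.log (u i θstar) + Real.log (1 + t₀ * a i)
        ≤ Real.log (u i ((1 - t₀) • θstar + t₀ • θ')) := by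
      intro i
      have h2 : Real.log (u i θstar * (1 + t₀ * a i))
          ≤ Real.log (u i ((1 - t₀) • θstar + t₀ • θ')) := by
        apply Real.log_le_log (by rw [← heq i]; exact hposc i)
        rw [← heq i]; exact hcomb i
      rwa [Real.log_mul (hus i).ne' (h1pt i).ne'] at h2
    have h3 := Finset.sum_le_sum (fun i (_ : i ∈ Finset.univ) => h1 i)
    rw [Finset.sum_add_distrib] at h3
    have h4 := hmax _ hθtP
    linarith
  have hlb : ∑ i : Fin n, (t₀ * a i - 2*(t₀ * a i)^2)
      ≤ ∑ i : Fin n, Real.log (1 + t₀ * a i) :=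
    Finset.sum_le_sum (fun i _ => log_one_add_ge (hzlb i))
  have h8 : ∑ i : Fin n, (t₀ * a i - 2*(t₀ * a i)^2) = t₀ * c - 2*t₀^2*B := by
    rw [hcdef, hBdef, Finset.mul_sum, Finset.mul_sum, ← Finset.sum_sub_distrib]
    exact Finset.sum_congr rfl (fun i _ => by ring)
  have h9 : t₀ * (4*B+1) ≤ c := by
    rw [← le_div_iff₀ (by positivity)]
    exact ht₀ ▸ min_le_right _ _
  have hfinal : 0 < t₀ * c - 2*t₀^2*B := by
    nlinarith [mul_le_mul_of_nonneg_left h9 ht0.le,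
      mul_nonneg (mul_nonneg ht0.le ht0.le) hB, mul_pos ht0 ht0]
  linarith
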